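/- Let l: (0,∞) → ℝ, l(s) = (n-1+4A)(1/R) coth(s/R), and for t > 0 let G_t: (0,t] → ℝ solve G'' + l G' = 1 with G' < 0, G(t) = 0, and G(s) → +∞ as s → 0⁺. Then G_t(s) is comparable to s^{2-n-4A} as s → 0⁺, i.e. G_t(s)·s^{n+4A-2} converges to a positive constant as s → 0⁺ (assuming n + 4A > 2). -/

import Mathlib

open Real Filter

noncomputable section

theorem green_type_solution_asymptotics (n : ℕ) (hn : 2 ≤ n)
    (A R t : ℝ) (hA : 0 < A) (hR : 0 < R) (ht : 0 < t)
    (hdeg : (2 : ℝ) < (n : ℝ) + 4 * A)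
    (G G' G'' : ℝ → ℝ)
    (hG : ∀ s ∈ Set.Ioc (0 : ℝ) t, HasDerivAt G (G' s) s)
    (hG' : ∀ s ∈ Set.Ioc (0 : ℝ) t, HasDerivAt G' (G'' s) s)
    (hode : ∀ s ∈ Set.Ioc (0 : ℝ) t,
      G'' s + (((n : ℝ) - 1 + 4 * A) * (1 / R) *
        (Real.cosh (s / R) / Real.sinh (s / R))) * G' s = 1)
    (hdec : ∀ s ∈ Set.Ioc (0 : ℝ) t, G' s < 0)
    (hGt : G t = 0)
    (hblow : Tendsto G (nhdsWithin 0 (Set.Ioi 0)) atTop) :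
    ∃ c : ℝ, 0 < c ∧
      Tendsto (fun s : ℝ => G s * s ^ ((n : ℝ) + 4 * A - 2))
        (nhdsWithin 0 (Set.Ioi 0)) (nhds c) := by
  set ν : ℝ := (n : ℝ) - 1 + 4 * A with hνdef
  have hν1 : (1 : ℝ) < ν := by rw [hνdef]; linarith
  have hν0 : (0 : ℝ) < ν - 1 := by linarith
  have hνne : (1 : ℝ) - ν ≠ 0 := by linarith
  have hexp : (n : ℝ) + 4 * A - 2 = ν - 1 := by rw [hνdef]; ring
  have hsinh : ∀ s : ℝ, 0 < s → 0 < Real.sinh (s / R) := fun s hs =>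
    Real.sinh_pos_iff.mpr (div_pos hs hR)
  set μ : ℝ → ℝ := fun s => Real.sinh (s / R) ^ ν with hμdef
  have hμcont : Continuous μ := by
    exact (Real.continuous_sinh.comp (continuous_id.div_const R)).rpow_const
      (fun x => Or.inr (by linarith))
  have hμpos : ∀ s : ℝ, 0 < s → 0 < μ s := fun s hs =>
    Real.rpow_pos_of_pos (hsinh s hs) ν
  -- derivative of μ
  have hμderiv : ∀ s : ℝ, 0 < s → HasDerivAt μ
      (ν * Real.sinh (s / R) ^ (ν - 1) * (Real.cosh (s / R) * (1 / R))) s := by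
    intro s hs
    have h1 : HasDerivAt (fun x : ℝ => Real.sinh (x / R)) (Real.cosh (s / R) * (1 / R)) s := by
      simpa using ((hasDerivAt_id' s).div_const R).sinh
    have := h1.rpow_const (p := ν) (Or.inl (hsinh s hs).ne')
    convert this using 1
    ring
  set H : ℝ → ℝ := fun s => μ s * G' s with hHdef
  have hH : ∀ s ∈ Set.Ioc (0 : ℝ) t, HasDerivAt H (μ s) s := by
    intro s hs
    have hd := (hμderiv s hs.1).mul (hG' s hs)
    have hO := hode s hs
    have hne := (hsinh s hs.1).ne'
    have hrw : Real.sinh (s/R) ^ (ν - 1) = Real.sinh (s/R) ^ ν / Real.sinh (s/R) :=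
      Real.rpow_sub_one hne ν
    have hG''eq : G'' s = 1 - ν * (1 / R) * (Real.cosh (s / R) / Real.sinh (s / R)) * G' s := by
      linarith
    convert (show HasDerivAt (fun x => μ x * G' x) _ s from hd) using 1
    simp only [hμdef, hrw, hG''eq]
    field_simp
    ring
  set J : ℝ → ℝ := fun u => ∫ x in (0 : ℝ)..u, μ x with hJdef
  have hJd : ∀ u : ℝ, HasDerivAt J (μ u) u := by
    intro u
    exact intervalIntegral.integral_hasDerivAt_right
      (hμcont.intervalIntegrable 0 u)
      (hμcont.stronglyMeasurableAtFilter _ _)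
      hμcont.continuousAt
  have hJ0 : Tendsto J (nhdsWithin 0 (Set.Ioi 0)) (nhds 0) := by
    have h := (hJd 0).continuousAt.tendsto
    rw [show J 0 = 0 from intervalIntegral.integral_same] at h
    exact h.mono_left nhdsWithin_le_nhds
  set c₁ : ℝ := H t - J t with hc₁def
  have hHs : ∀ s ∈ Set.Ioc (0 : ℝ) t, H s = c₁ + J s := by
    intro s hs
    have hsub : Set.uIcc s t ⊆ Set.Ioc (0:ℝ) t := by
      rw [Set.uIcc_of_le hs.2]
      intro u hu
      exact ⟨lt_of_lt_of_le hs.1 hu.1, hu.2⟩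
    have hftc : ∫ u in s..t, μ u = H t - H s :=
      intervalIntegral.integral_eq_sub_of_hasDerivAt (fun u hu => hH u (hsub hu))
        (hμcont.intervalIntegrable s t)
    have hJdiff : J t - J s = ∫ u in s..t, μ u := by
      rw [hJdef]
      exact intervalIntegral.integral_interval_sub_left (hμcont.intervalIntegrable 0 t)
        (hμcont.intervalIntegrable 0 s)
    rw [hc₁def]; linarith
  have hc₁ : c₁ < 0 := by
    have hHt : H t < 0 := mul_neg_of_pos_of_neg (hμpos t ht) (hdec t ⟨ht, le_refl t⟩)
    have hJt : 0 ≤ J t := by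
      apply intervalIntegral.integral_nonneg ht.le
      intro u hu
      exact Real.rpow_nonneg (Real.sinh_nonneg_iff.mpr (div_nonneg hu.1 hR.le)) ν
    rw [hc₁def]; linarith
  set K : ℝ := -c₁ * R ^ ν with hKdef
  have hK : 0 < K := mul_pos (by linarith) (Real.rpow_pos_of_pos hR ν)
  have hφ : Tendsto (fun s => -G' s * s ^ ν) (nhdsWithin 0 (Set.Ioi 0)) (nhds K) := by
    have hslope : Tendsto (fun x : ℝ => Real.sinh x / x) (nhdsWithin 0 {(0:ℝ)}ᶜ) (nhds 1) := by
      have h := hasDerivAt_iff_tendsto_slope.mp (Real.hasDerivAt_sinh 0)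
      rw [Real.cosh_zero] at h
      refine h.congr fun x => ?_
      rw [slope_def_field, Real.sinh_zero, sub_zero, sub_zero]
    have hinv : Tendsto (fun x : ℝ => x / Real.sinh x) (nhdsWithin 0 {(0:ℝ)}ᶜ) (nhds 1) := by
      have h := hslope.inv₀ one_ne_zero
      rw [inv_one] at h
      refine h.congr fun x => ?_
      rw [inv_div]
    have hmap : Tendsto (fun s : ℝ => s / R) (nhdsWithin 0 (Set.Ioi 0))
        (nhdsWithin 0 {(0:ℝ)}ᶜ) := by
      rw [tendsto_nhdsWithin_iff]
      constructor
      · have h : Tendsto (fun s : ℝ => s / R) (nhds 0) (nhds (0 / R)) :=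
          (continuous_id.div_const R).tendsto 0
        rw [zero_div] at h
        exact h.mono_left nhdsWithin_le_nhds
      · filter_upwards [self_mem_nhdsWithin] with s hs
        exact Set.mem_compl_singleton_iff.mpr (div_pos hs hR).ne'
    have h2 : Tendsto (fun s : ℝ => s / Real.sinh (s / R)) (nhdsWithin 0 (Set.Ioi 0))
        (nhds R) := by
      have h := (hinv.comp hmap).const_mul R
      rw [mul_one] at h
      refine h.congr fun s => ?_
      show R * (s / R / Real.sinh (s / R)) = s / Real.sinh (s / R)
      rw [div_div, mul_div_assoc', mul_div_mul_left _ _ hR.ne']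
    have h3 : Tendsto (fun s : ℝ => (s / Real.sinh (s / R)) ^ ν)
        (nhdsWithin 0 (Set.Ioi 0)) (nhds (R ^ ν)) := h2.rpow_const (Or.inl hR.ne')
    have h1 : Tendsto (fun s : ℝ => -(c₁ + J s)) (nhdsWithin 0 (Set.Ioi 0)) (nhds (-c₁)) := by
      have h := ((tendsto_const_nhds (x := c₁)).add hJ0).neg
      simpa using h
    have hFt := h1.mul h3
    rw [← hKdef] at hFt
    refine hFt.congr' ?_
    filter_upwards [Ioc_mem_nhdsGT_of_mem ⟨le_refl (0:ℝ), ht⟩] with s hs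
    have hμs := hμpos s hs.1
    have hHval := hHs s hs
    rw [Real.div_rpow hs.1.le (hsinh s hs.1).le, ← hHval]
    simp only [hHdef, hμdef]
    have hne : Real.sinh (s / R) ^ ν ≠ 0 := (Real.rpow_pos_of_pos (hsinh s hs.1) ν).ne'
    field_simp
  refine ⟨K / (ν - 1), div_pos hK hν0, ?_⟩
  simp only [hexp]
  have htend0 : Tendsto (fun s : ℝ => s ^ (ν - 1)) (nhdsWithin 0 (Set.Ioi 0)) (nhds 0) := by
    have h := (Real.continuousAt_rpow_const 0 (ν - 1) (Or.inr hν0.le)).tendsto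
    rw [Real.zero_rpow hν0.ne'] at h
    exact h.mono_left nhdsWithin_le_nhds
  rw [Metric.tendsto_nhds]
  intro ε hε
  set ε' : ℝ := min (ε * (ν - 1) / 2) (K / 2) with hε'def
  have hε'pos : 0 < ε' := lt_min (by positivity) (by positivity)
  have hε'2 : ε' / (ν - 1) ≤ ε / 2 := by
    have h := min_le_left (ε * (ν - 1) / 2) (K / 2)
    rw [div_le_div_iff₀ hν0 two_pos]
    rw [hε'def]
    nlinarith
  have hev := (Metric.tendsto_nhds.mp hφ) ε' hε'pos
  obtain ⟨δ₁, hδ₁, hsub⟩ := mem_nhdsGT_iff_exists_Ioc_subset.mp hev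
  set δ : ℝ := min δ₁ t with hδdef
  have hδpos : 0 < δ := lt_min hδ₁ ht
  have hδt : δ ≤ t := min_le_right _ _
  have hδφ : ∀ u : ℝ, 0 < u → u ≤ δ →
      K - ε' ≤ -G' u * u ^ ν ∧ -G' u * u ^ ν ≤ K + ε' := by
    intro u hu hud
    have h := hsub ⟨hu, hud.trans (min_le_left _ _)⟩
    simp only [Set.mem_setOf_eq] at h
    rw [Real.dist_eq, abs_lt] at h
    exact ⟨by linarith [h.1], by linarith [h.2]⟩
  have key : ∀ s : ℝ, 0 < s → s < δ →
      G δ * s ^ (ν - 1) + (K - ε') * ((1 - δ ^ (-ν + 1) * s ^ (ν - 1)) / (ν - 1))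
        ≤ G s * s ^ (ν - 1) ∧
      G s * s ^ (ν - 1)
        ≤ G δ * s ^ (ν - 1) + (K + ε') * ((1 - δ ^ (-ν + 1) * s ^ (ν - 1)) / (ν - 1)) := by
    intro s hs0 hsδ
    have hsδle : s ≤ δ := hsδ.le
    have hIcc : Set.Icc s δ ⊆ Set.Ioc (0 : ℝ) t := fun u hu =>
      ⟨lt_of_lt_of_le hs0 hu.1, hu.2.trans hδt⟩
    have huIcc : Set.uIcc s δ = Set.Icc s δ := Set.uIcc_of_le hsδle
    have hintG' : IntervalIntegrable G' MeasureTheory.volume s δ := by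
      apply ContinuousOn.intervalIntegrable
      rw [huIcc]
      exact fun u hu => ((hG' u (hIcc hu)).continuousAt).continuousWithinAt
    have hftc : ∫ u in s..δ, G' u = G δ - G s :=
      intervalIntegral.integral_eq_sub_of_hasDerivAt
        (fun u hu => hG u (hIcc (huIcc ▸ hu))) hintG'
    have hcpow : ContinuousOn (fun u : ℝ => u ^ (-ν)) (Set.Icc s δ) := fun u hu =>
      (Real.continuousAt_rpow_const u (-ν)
        (Or.inl (lt_of_lt_of_le hs0 hu.1).ne')).continuousWithinAt
    have hlow : ∀ u ∈ Set.Icc s δ, (K - ε') * u ^ (-ν) ≤ -G' u := by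
      intro u hu
      have hu0 : 0 < u := lt_of_lt_of_le hs0 hu.1
      have hb := (hδφ u hu0 hu.2).1
      have hup : (0 : ℝ) < u ^ ν := Real.rpow_pos_of_pos hu0 ν
      rw [Real.rpow_neg hu0.le]
      calc (K - ε') * (u ^ ν)⁻¹ ≤ -G' u * u ^ ν * (u ^ ν)⁻¹ :=
            mul_le_mul_of_nonneg_right hb (inv_nonneg.mpr hup.le)
        _ = -G' u := by field_simp
    have hupb : ∀ u ∈ Set.Icc s δ, -G' u ≤ (K + ε') * u ^ (-ν) := by
      intro u hu
      have hu0 : 0 < u := lt_of_lt_of_le hs0 hu.1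
      have hb := (hδφ u hu0 hu.2).2
      have hup : (0 : ℝ) < u ^ ν := Real.rpow_pos_of_pos hu0 ν
      rw [Real.rpow_neg hu0.le]
      calc -G' u = -G' u * u ^ ν * (u ^ ν)⁻¹ := by field_simp
        _ ≤ (K + ε') * (u ^ ν)⁻¹ :=
            mul_le_mul_of_nonneg_right hb (inv_nonneg.mpr hup.le)
    have hnu : (0 : ℝ) ∉ Set.uIcc s δ := by
      rw [huIcc]
      intro h
      exact absurd h.1 (not_le.mpr hs0)
    have hIint : ∫ u in s..δ, u ^ (-ν) = (δ ^ (-ν + 1) - s ^ (-ν + 1)) / (-ν + 1) :=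
      integral_rpow (Or.inr ⟨by intro h; have := neg_inj.mp h; linarith, hnu⟩)
    have hintpow : IntervalIntegrable (fun u : ℝ => u ^ (-ν)) MeasureTheory.volume s δ := by
      apply ContinuousOn.intervalIntegrable
      rw [huIcc]
      exact hcpow
    have hmono1 : ∫ u in s..δ, (K - ε') * u ^ (-ν) ≤ ∫ u in s..δ, -G' u :=
      intervalIntegral.integral_mono_on hsδle (hintpow.const_mul _) hintG'.neg hlow
    have hmono2 : ∫ u in s..δ, -G' u ≤ ∫ u in s..δ, (K + ε') * u ^ (-ν) :=
      intervalIntegral.integral_mono_on hsδle hintG'.neg (hintpow.const_mul _) hupb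
    rw [intervalIntegral.integral_neg, hftc, intervalIntegral.integral_const_mul, hIint]
      at hmono1 hmono2
    have hsp : (0 : ℝ) < s ^ (ν - 1) := Real.rpow_pos_of_pos hs0 _
    have hss : s ^ (-ν + 1) * s ^ (ν - 1) = 1 := by
      rw [← Real.rpow_add hs0]
      norm_num
    have hid : ((δ ^ (-ν + 1) - s ^ (-ν + 1)) / (-ν + 1)) * s ^ (ν - 1)
        = (1 - δ ^ (-ν + 1) * s ^ (ν - 1)) / (ν - 1) := by
      rw [div_mul_eq_mul_div, sub_mul, hss]
      rw [div_eq_div_iff (by linarith) (by linarith)]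
      ring
    have h1 := mul_le_mul_of_nonneg_right hmono1 hsp.le
    have h2 := mul_le_mul_of_nonneg_right hmono2 hsp.le
    rw [mul_assoc, hid, neg_sub, sub_mul] at h1 h2
    exact ⟨by linarith, by linarith⟩
  have hval1 : G δ * 0 + (K - ε') * ((1 - δ ^ (-ν + 1) * 0) / (ν - 1)) = (K - ε') / (ν - 1) := by
    ring
  have hval2 : G δ * 0 + (K + ε') * ((1 - δ ^ (-ν + 1) * 0) / (ν - 1)) = (K + ε') / (ν - 1) := by
    ring
  have hlb : Tendsto
      (fun s : ℝ => G δ * s ^ (ν - 1) + (K - ε') * ((1 - δ ^ (-ν + 1) * s ^ (ν - 1)) / (ν - 1)))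
      (nhdsWithin 0 (Set.Ioi 0)) (nhds ((K - ε') / (ν - 1))) := by
    have h := (htend0.const_mul (G δ)).add
      ((((htend0.const_mul (δ ^ (-ν + 1))).const_sub 1).div_const (ν - 1)).const_mul (K - ε'))
    rw [hval1] at h
    exact h
  have hub : Tendsto
      (fun s : ℝ => G δ * s ^ (ν - 1) + (K + ε') * ((1 - δ ^ (-ν + 1) * s ^ (ν - 1)) / (ν - 1)))
      (nhdsWithin 0 (Set.Ioi 0)) (nhds ((K + ε') / (ν - 1))) := by
    have h := (htend0.const_mul (G δ)).add
      ((((htend0.const_mul (δ ^ (-ν + 1))).const_sub 1).div_const (ν - 1)).const_mul (K + ε'))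
    rw [hval2] at h
    exact h
  have hdiv1 : (K - ε') / (ν - 1) = K / (ν - 1) - ε' / (ν - 1) := by ring
  have hdiv2 : (K + ε') / (ν - 1) = K / (ν - 1) + ε' / (ν - 1) := by ring
  have hLl : K / (ν - 1) - ε < (K - ε') / (ν - 1) := by
    rw [hdiv1]
    linarith
  have hLu : (K + ε') / (ν - 1) < K / (ν - 1) + ε := by
    rw [hdiv2]
    linarith
  have ev1 := hlb.eventually (eventually_gt_nhds hLl)
  have ev2 := hub.eventually (eventually_lt_nhds hLu)
  have ev3 : Set.Ioo 0 δ ∈ nhdsWithin 0 (Set.Ioi 0) :=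
    Ioo_mem_nhdsGT_of_mem ⟨le_refl 0, hδpos⟩
  filter_upwards [ev1, ev2, ev3] with s hs1 hs2 hs3
  have hk := key s hs3.1 hs3.2
  rw [Real.dist_eq, abs_lt]
  exact ⟨by linarith [hk.1], by linarith [hk.2]⟩
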